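/- Every *-nested set in a finite-dimensional vector space V* admits an adapted basis: if 𝓝 is a finite set of nonzero subspaces of V* such that every collection of pairwise non-comparable (under inclusion) members N_1,...,N_k satisfies that their sum is direct and that this sum is not itself a member of 𝓝, then there is a basis B of V* such that for every N ∈ 𝓝, the set B ∩ N spans N. -/

import Mathlib

open Module Submodule Set

private theorem span_top_of_extension {K V : Type*} [Field K] [AddCommGroup V] [Module K V]
    {B : Set V} (h : Set.univ ⊆ (Submodule.span K B : Set V)) : Submodule.span K B = ⊤ :=
  Submodule.eq_top_iff'.mpr fun x => h (Set.mem_univ x)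

private theorem adapted_aux : ∀ (n : ℕ) {K V : Type*} [Field K] [AddCommGroup V]
    [Module K V] [FiniteDimensional K V], Module.finrank K V ≤ n →
    ∀ 𝓝 : Finset (Submodule K V), ⊤ ∉ 𝓝 → (∀ N ∈ 𝓝, N ≠ ⊥) →
    (∀ s : Finset (Submodule K V), s ⊆ 𝓝 → 2 ≤ s.card →
      (∀ N₁ ∈ s, ∀ N₂ ∈ s, N₁ ≠ N₂ → ¬N₁ ≤ N₂) →
      Module.finrank K ↥(s.sup id) = (∑ N ∈ s, Module.finrank K ↥N) ∧ s.sup id ∉ 𝓝) →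
    ∃ B : Set V, LinearIndependent K ((↑) : B → V) ∧ Submodule.span K B = ⊤ ∧
      ∀ N ∈ 𝓝, Submodule.span K (B ∩ (N : Set V)) = N := by
  intro n
  induction n with
  | zero =>
    intro K V _ _ _ _ hdim 𝓝 htop h0 hnested
    have h𝓝 : 𝓝 = ∅ := by
      rw [Finset.eq_empty_iff_forall_notMem]
      intro N hN
      have h1 : Module.finrank K ↥N ≤ Module.finrank K V := N.finrank_le
      have h2 : Module.finrank K ↥N = 0 := by omega
      exact h0 N hN (Submodule.finrank_eq_zero.mp h2)
    obtain ⟨B, -, -, hsp, hind⟩ :=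
      exists_linearIndepOn_extension (v := id) (linearIndependent_empty K V) (Set.empty_subset Set.univ)
    exact ⟨B, hind, span_top_of_extension (by rwa [Set.image_id, Set.image_id] at hsp), by simp [h𝓝]⟩
  | succ n ih =>
    intro K V _ _ _ _ hdim 𝓝 htop h0 hnested
    classical
    set maxset := 𝓝.filter (fun M => ∀ N' ∈ 𝓝, ¬ M < N') with hmaxdef
    have hmax_mem : maxset ⊆ 𝓝 := Finset.filter_subset _ _
    have hle_max : ∀ N ∈ 𝓝, ∃ M ∈ maxset, N ≤ M := by
      intro N hN
      obtain ⟨M, hM, hmax⟩ : ∃ m ∈ 𝓝.filter (fun P => N ≤ P),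
          ∀ x ∈ 𝓝.filter (fun P => N ≤ P), ¬ m < x := by
        obtain ⟨m, hm⟩ := Finset.exists_maximal (s := 𝓝.filter (fun P => N ≤ P))
          ⟨N, Finset.mem_filter.mpr ⟨hN, le_refl N⟩⟩
        exact ⟨m, hm.1, fun x hx hlt => lt_irrefl _ (lt_of_lt_of_le hlt (hm.2 hx hlt.le))⟩
      have hM' := Finset.mem_filter.mp hM
      refine ⟨M, Finset.mem_filter.mpr ⟨hM'.1, fun N' hN' hlt => ?_⟩, hM'.2⟩
      exact hmax N' (Finset.mem_filter.mpr ⟨hN', hM'.2.trans hlt.le⟩) hlt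
    have hpairwise : ∀ M₁ ∈ maxset, ∀ M₂ ∈ maxset, M₁ ≠ M₂ → ¬ M₁ ≤ M₂ := by
      intro M₁ h1 M₂ h2 hne hle
      exact (Finset.mem_filter.mp h1).2 M₂ (hmax_mem h2) (lt_of_le_of_ne hle hne)
    have hfr : ∀ s : Finset (Submodule K V), s ⊆ maxset →
        Module.finrank K ↥(s.sup id) = ∑ N ∈ s, Module.finrank K ↥N := by
      intro s hs
      rcases lt_or_ge s.card 2 with h2 | h2
      · interval_cases h : s.card
        · rw [Finset.card_eq_zero.mp h]; simp
        · obtain ⟨N, rfl⟩ := Finset.card_eq_one.mp h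
          rw [Finset.sup_singleton, Finset.sum_singleton, id_eq]
      · exact (hnested s (hs.trans hmax_mem) h2
          (fun a ha b hb => hpairwise a (hs ha) b (hs hb))).1
    have hdisj : ∀ M ∈ maxset, ∀ s : Finset (Submodule K V), s ⊆ maxset → M ∉ s →
        Disjoint M (s.sup id) := by
      intro M hM s hs hMs
      have h1 := hfr s hs
      have h2 := hfr (insert M s) (Finset.insert_subset hM hs)
      rw [Finset.sup_insert, Finset.sum_insert hMs] at h2
      have h3 := Submodule.finrank_sup_add_finrank_inf_eq M (s.sup id)
      simp only [id] at h2
      have h4 : Module.finrank K ↥(M ⊓ s.sup id) = 0 := by omega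
      exact disjoint_iff.mpr (Submodule.finrank_eq_zero.mp h4)
    -- per maximal element: an adapted independent spanning set
    have key : ∀ M : Submodule K V, ∃ C : Set V, M ∈ maxset → C ⊆ (M : Set V) ∧
        LinearIndependent K ((↑) : C → V) ∧ Submodule.span K C = M ∧
        ∀ N ∈ 𝓝, N ≤ M → N ≤ Submodule.span K (C ∩ (N : Set V)) := by
      intro M
      by_cases hMmax : M ∈ maxset
      swap
      · exact ⟨∅, fun h => absurd h hMmax⟩
      have hMne : M ≠ ⊤ := fun h => htop (h ▸ hmax_mem hMmax)
      have hφψ : ∀ N : Submodule K V, N ≤ M →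
          Submodule.map M.subtype (Submodule.comap M.subtype N) = N := fun N h => by
        rw [Submodule.map_comap_subtype]; exact inf_eq_right.mpr h
      set 𝓝M := (𝓝.filter (fun N => N < M)).image (Submodule.comap M.subtype) with h𝓝M
      have hmem : ∀ q ∈ 𝓝M, Submodule.map M.subtype q ∈ 𝓝 ∧ Submodule.map M.subtype q < M := by
        intro q hq
        obtain ⟨N, hN, rfl⟩ := Finset.mem_image.mp hq
        have hN' := Finset.mem_filter.mp hN
        rw [hφψ N hN'.2.le]
        exact ⟨hN'.1, hN'.2⟩
      have hφinj : Function.Injective (Submodule.map M.subtype) :=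
        Submodule.map_injective_of_injective M.injective_subtype
      have hdim' : Module.finrank K ↥M ≤ n := by
        have := Submodule.finrank_lt (K := K) (V := V) hMne
        omega
      have htop' : (⊤ : Submodule K ↥M) ∉ 𝓝M := by
        intro h
        have := (hmem ⊤ h).2
        rw [Submodule.map_subtype_top] at this
        exact lt_irrefl M this
      have h0' : ∀ q ∈ 𝓝M, q ≠ ⊥ := by
        intro q hq h
        subst h
        have := (hmem ⊥ hq).1
        rw [Submodule.map_bot] at this
        exact h0 ⊥ this rfl
      have hnested' : ∀ s' : Finset (Submodule K ↥M), s' ⊆ 𝓝M → 2 ≤ s'.card →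
          (∀ N₁ ∈ s', ∀ N₂ ∈ s', N₁ ≠ N₂ → ¬N₁ ≤ N₂) →
          Module.finrank K ↥(s'.sup id) = (∑ N ∈ s', Module.finrank K ↥N) ∧
            s'.sup id ∉ 𝓝M := by
        intro s' hs' hcard hpnc
        set s := s'.image (Submodule.map M.subtype) with hs
        have hsub : s ⊆ 𝓝 := by
          intro N hN
          obtain ⟨q, hq, rfl⟩ := Finset.mem_image.mp hN
          exact (hmem q (hs' hq)).1
        have hcard2 : s.card = s'.card := Finset.card_image_of_injective s' hφinj
        have hpnc' : ∀ N₁ ∈ s, ∀ N₂ ∈ s, N₁ ≠ N₂ → ¬ N₁ ≤ N₂ := by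
          intro N₁ h1 N₂ h2 hne hle
          obtain ⟨q₁, hq₁, rfl⟩ := Finset.mem_image.mp h1
          obtain ⟨q₂, hq₂, rfl⟩ := Finset.mem_image.mp h2
          exact hpnc q₁ hq₁ q₂ hq₂ (fun h => hne (by rw [h]))
            ((Submodule.map_le_map_iff_of_injective M.injective_subtype q₁ q₂).mp hle)
        have hsup : s.sup id = Submodule.map M.subtype (s'.sup id) := by
          rw [hs, Finset.sup_image]
          exact (Finset.comp_sup_eq_sup_comp (Submodule.map M.subtype)
            (fun a b => Submodule.map_sup a b M.subtype) (Submodule.map_bot M.subtype)).symm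
        obtain ⟨e1, e2⟩ := hnested s hsub (hcard2 ▸ hcard) hpnc'
        constructor
        · rw [hsup, Submodule.finrank_map_subtype_eq] at e1
          rw [e1, hs, Finset.sum_image (fun a _ b _ h => hφinj h)]
          exact Finset.sum_congr rfl fun q _ => Submodule.finrank_map_subtype_eq M q
        · intro hsupmem
          have := (hmem _ hsupmem).1
          rw [← hsup] at this
          exact e2 this
      obtain ⟨B', hB'ind, hB'span, hB'ad⟩ := ih hdim' 𝓝M htop' h0' hnested'
      refine ⟨Subtype.val '' B', fun _ => ⟨?_, ?_, ?_, ?_⟩⟩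
      · rintro x ⟨y, -, rfl⟩; exact y.2
      · have h1 : LinearIndependent K (fun x : B' => M.subtype x) :=
          hB'ind.map' M.subtype (Submodule.ker_subtype M)
        exact (linearIndepOn_iff_image (Subtype.val_injective.injOn)).mp h1
      · rw [show (Subtype.val '' B' : Set V) = ⇑M.subtype '' B' from rfl,
          Submodule.span_image, hB'span, Submodule.map_top, Submodule.range_subtype]
      · intro N hN hNM
        have hspC : Submodule.span K (Subtype.val '' B') = M := by
          rw [show (Subtype.val '' B' : Set V) = ⇑M.subtype '' B' from rfl,
            Submodule.span_image, hB'span, Submodule.map_top, Submodule.range_subtype]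
        rcases eq_or_lt_of_le hNM with rfl | hlt
        · have hCN : Subtype.val '' B' ∩ (N : Set V) = Subtype.val '' B' := by
            refine Set.inter_eq_self_of_subset_left ?_
            rintro x ⟨y, -, rfl⟩; exact y.2
          rw [hCN, hspC]
        · have hq : Submodule.comap M.subtype N ∈ 𝓝M :=
            Finset.mem_image_of_mem _ (Finset.mem_filter.mpr ⟨hN, hlt⟩)
          have had := hB'ad _ hq
          calc N = Submodule.map M.subtype
                (Submodule.span K (B' ∩ (Submodule.comap M.subtype N : Set ↥M))) := by
                rw [had, hφψ N hNM]
            _ = Submodule.span K (⇑M.subtype '' (B' ∩ (Submodule.comap M.subtype N : Set ↥M))) :=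
                (Submodule.span_image _).symm
            _ ≤ Submodule.span K (Subtype.val '' B' ∩ (N : Set V)) := by
                refine Submodule.span_mono ?_
                rintro x ⟨y, ⟨hy1, hy2⟩, rfl⟩
                exact ⟨⟨y, hy1, rfl⟩, hy2⟩
    choose C hC using key
    have main : ∀ s : Finset (Submodule K V), s ⊆ maxset →
        LinearIndependent K ((↑) : ↥(⋃ M ∈ (s : Set (Submodule K V)), C M) → V) ∧
        Submodule.span K (⋃ M ∈ (s : Set (Submodule K V)), C M) = s.sup id := by
      intro s
      induction s using Finset.induction_on with
      | empty =>
        intro _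
        have he : (⋃ M ∈ ((∅ : Finset (Submodule K V)) : Set (Submodule K V)), C M)
            = (∅ : Set V) := by simp
        rw [he, Finset.sup_empty]
        exact ⟨linearIndependent_empty K V, Submodule.span_empty⟩
      | insert _ _ hM =>
        rename_i M s' ihs
        intro hsub
        have hsub' : s' ⊆ maxset := fun x hx => hsub (Finset.mem_insert_of_mem hx)
        have hMmax : M ∈ maxset := hsub (Finset.mem_insert_self M s')
        obtain ⟨h1ind, h1span⟩ := ihs hsub'
        obtain ⟨-, hCind, hCspan, -⟩ := hC M hMmax
        have hU : (⋃ P ∈ ((insert M s' : Finset (Submodule K V)) : Set (Submodule K V)), C P)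
            = C M ∪ ⋃ P ∈ (s' : Set (Submodule K V)), C P := by
          rw [Finset.coe_insert, Set.biUnion_insert]
        have hdisj' : Disjoint (Submodule.span K (C M))
            (Submodule.span K (⋃ P ∈ (s' : Set (Submodule K V)), C P)) := by
          rw [hCspan, h1span]
          exact hdisj M hMmax s' hsub' hM
        constructor
        · rw [hU]; exact LinearIndepOn.id_union hCind h1ind hdisj'
        · rw [hU, Submodule.span_union, hCspan, h1span, Finset.sup_insert]; rfl
    obtain ⟨hDind, hDspan⟩ := main maxset (subset_refl _)
    obtain ⟨B, -, hDB, hsp, hBind⟩ :=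
      exists_linearIndepOn_extension (v := id) hDind
        (Set.subset_univ (⋃ M ∈ (maxset : Set (Submodule K V)), C M))
    refine ⟨B, hBind, span_top_of_extension (by rwa [Set.image_id, Set.image_id] at hsp), ?_⟩
    intro N hN
    obtain ⟨M, hM, hNM⟩ := hle_max N hN
    refine le_antisymm (Submodule.span_le.mpr Set.inter_subset_right) ?_
    obtain ⟨-, -, -, had⟩ := hC M hM
    refine (had N hN hNM).trans (Submodule.span_mono ?_)
    have hCMB : C M ⊆ B := by
      refine Set.Subset.trans ?_ hDB
      exact Set.subset_biUnion_of_mem hM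
    exact Set.inter_subset_inter_left _ hCMB

theorem stmt_10 {K V : Type*} [Field K] [AddCommGroup V] [Module K V] [FiniteDimensional K V]
    (𝓝 : Finset (Submodule K V)) (h0 : ∀ N ∈ 𝓝, N ≠ ⊥)
    (hnested : ∀ s : Finset (Submodule K V), s ⊆ 𝓝 → 2 ≤ s.card →
      (∀ N₁ ∈ s, ∀ N₂ ∈ s, N₁ ≠ N₂ → ¬N₁ ≤ N₂) →
      Module.finrank K ↥(s.sup id) = (∑ N ∈ s, Module.finrank K ↥N) ∧ s.sup id ∉ 𝓝) :
    ∃ B : Set V, LinearIndependent K ((↑) : B → V) ∧ Submodule.span K B = ⊤ ∧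
      ∀ N ∈ 𝓝, Submodule.span K (B ∩ (N : Set V)) = N := by
  classical
  obtain ⟨B, hind, hspan, had⟩ := adapted_aux (Module.finrank K V) le_rfl (𝓝.erase ⊤)
    (Finset.notMem_erase _ _)
    (fun N hN => h0 N (Finset.erase_subset _ _ hN))
    (fun s hs h2 hpnc => by
      obtain ⟨e1, e2⟩ := hnested s (hs.trans (Finset.erase_subset _ _)) h2 hpnc
      exact ⟨e1, fun h => e2 (Finset.erase_subset _ _ h)⟩)
  refine ⟨B, hind, hspan, fun N hN => ?_⟩
  by_cases hNtop : N = ⊤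
  · subst hNtop
    simpa using hspan
  · exact had N (Finset.mem_erase.mpr ⟨hNtop, hN⟩)
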